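/- For every n̄ > 0 and η ∈ (1/2, 1], the second derivative with respect to η of L(η, n̄) = g(η n̄) − g((1−η) n̄) equals n̄²·(1/((1+(1−η)n̄)(1−η)n̄) − 1/((1+η n̄)η n̄)), and this quantity is nonnegative. -/

import Mathlib

noncomputable def g (x : ℝ) : ℝ := (1 + x) * Real.log (1 + x) - x * Real.log x

lemma g_hasDerivAt {x : ℝ} (hx : 0 < x) :
    HasDerivAt g (Real.log (1 + x) - Real.log x) x := by
  have h1x : (1 : ℝ) + x ≠ 0 := by linarith
  have h1 : HasDerivAt (fun y : ℝ => (1 + y) * Real.log (1 + y))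
      ((Real.log (1 + x) + 1) * 1) x := by
    exact (Real.hasDerivAt_mul_log h1x).comp x ((hasDerivAt_id x).const_add 1)
  have h2 : HasDerivAt (fun y : ℝ => y * Real.log y) (Real.log x + 1) x :=
    Real.hasDerivAt_mul_log hx.ne'
  have := h1.sub h2
  exact this.congr_deriv (by ring)

lemma f_hasDerivAt (nbar : ℝ) {η : ℝ} (hη0 : 0 < η) (hη1 : η < 1) (hn : 0 < nbar) :
    HasDerivAt (fun η : ℝ => g (η * nbar) - g ((1 - η) * nbar))
      ((Real.log (1 + η * nbar) - Real.log (η * nbar)) * nbar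
        + (Real.log (1 + (1 - η) * nbar) - Real.log ((1 - η) * nbar)) * nbar) η := by
  have ha : 0 < η * nbar := by positivity
  have hb : 0 < (1 - η) * nbar := by nlinarith
  have h1 : HasDerivAt (fun η : ℝ => g (η * nbar))
      ((Real.log (1 + η * nbar) - Real.log (η * nbar)) * nbar) η :=
    by
      have h' : HasDerivAt (fun y : ℝ => y * nbar) nbar η := by
        simpa using (hasDerivAt_id η).mul_const nbar
      have := (g_hasDerivAt ha).comp η h'
      exact this
  have lin : HasDerivAt (fun η : ℝ => (1 - η) * nbar) (-nbar) η := by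
    simpa using (((hasDerivAt_id η).const_sub 1).mul_const nbar)
  have h2 : HasDerivAt (fun η : ℝ => g ((1 - η) * nbar))
      ((Real.log (1 + (1 - η) * nbar) - Real.log ((1 - η) * nbar)) * (-nbar)) η :=
    by
      have := (g_hasDerivAt hb).comp η lin
      exact this
  have := h1.sub h2
  exact this.congr_deriv (by ring)

theorem L_second_deriv (nbar : ℝ) (hn : 0 < nbar) (η : ℝ) (hη : η ∈ Set.Ioo (1 / 2 : ℝ) 1) :
    iteratedDeriv 2 (fun η : ℝ => g (η * nbar) - g ((1 - η) * nbar)) η =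
      nbar ^ 2 * (1 / ((1 + (1 - η) * nbar) * ((1 - η) * nbar))
        - 1 / ((1 + η * nbar) * (η * nbar))) ∧
    0 ≤ nbar ^ 2 * (1 / ((1 + (1 - η) * nbar) * ((1 - η) * nbar))
        - 1 / ((1 + η * nbar) * (η * nbar))) := by
  obtain ⟨hη0, hη1⟩ := hη
  have hη0' : (0 : ℝ) < η := by linarith
  have ha : 0 < η * nbar := by positivity
  have hb : 0 < (1 - η) * nbar := by nlinarith
  have ha1 : (0 : ℝ) < 1 + η * nbar := by linarith
  have hb1 : (0 : ℝ) < 1 + (1 - η) * nbar := by linarith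
  constructor
  · rw [iteratedDeriv_succ, iteratedDeriv_one]
    have hopen : IsOpen (Set.Ioo (0 : ℝ) 1) := isOpen_Ioo
    have hmem : η ∈ Set.Ioo (0 : ℝ) 1 := ⟨hη0', hη1⟩
    have heq : (deriv (fun η : ℝ => g (η * nbar) - g ((1 - η) * nbar)))
        =ᶠ[nhds η] (fun η : ℝ =>
          (Real.log (1 + η * nbar) - Real.log (η * nbar)) * nbar
            + (Real.log (1 + (1 - η) * nbar) - Real.log ((1 - η) * nbar)) * nbar) := by
      filter_upwards [hopen.mem_nhds hmem] with x hx
      exact (f_hasDerivAt nbar hx.1 hx.2 hn).deriv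
    rw [heq.deriv_eq]
    have d1 : HasDerivAt (fun η : ℝ => Real.log (1 + η * nbar))
        ((1 + η * nbar)⁻¹ * nbar) η :=
      by
        have h' : HasDerivAt (fun y : ℝ => 1 + y * nbar) nbar η := by
          simpa using ((hasDerivAt_id η).mul_const nbar).const_add 1
        have := (Real.hasDerivAt_log ha1.ne').comp η h'
        exact this
    have d2 : HasDerivAt (fun η : ℝ => Real.log (η * nbar)) ((η * nbar)⁻¹ * nbar) η :=
      by
        have h' : HasDerivAt (fun y : ℝ => y * nbar) nbar η := by
          simpa using (hasDerivAt_id η).mul_const nbar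
        have := (Real.hasDerivAt_log ha.ne').comp η h'
        exact this
    have lin : HasDerivAt (fun η : ℝ => (1 - η) * nbar) (-nbar) η := by
      simpa using (((hasDerivAt_id η).const_sub 1).mul_const nbar)
    have lin1 : HasDerivAt (fun η : ℝ => 1 + (1 - η) * nbar) (-nbar) η := by
      simpa using lin.const_add 1
    have d3 : HasDerivAt (fun η : ℝ => Real.log (1 + (1 - η) * nbar))
        ((1 + (1 - η) * nbar)⁻¹ * (-nbar)) η :=
      by
        have := (Real.hasDerivAt_log hb1.ne').comp η lin1
        exact this
    have d4 : HasDerivAt (fun η : ℝ => Real.log ((1 - η) * nbar))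
        (((1 - η) * nbar)⁻¹ * (-nbar)) η :=
      by
        have := (Real.hasDerivAt_log hb.ne').comp η lin
        exact this
    have dtot := ((d1.sub d2).mul_const nbar).add ((d3.sub d4).mul_const nbar)
    rw [HasDerivAt.deriv (f := fun η : ℝ => (Real.log (1 + η * nbar) - Real.log (η * nbar)) * nbar
      + (Real.log (1 + (1 - η) * nbar) - Real.log ((1 - η) * nbar)) * nbar) dtot]
    field_simp
    ring
  · have hba : (1 - η) * nbar ≤ η * nbar := by nlinarith
    have key : 0 ≤ (η * nbar - (1 - η) * nbar) * (1 + η * nbar + (1 - η) * nbar) :=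
      mul_nonneg (by linarith) (by positivity)
    have hab : (1 + (1 - η) * nbar) * ((1 - η) * nbar) ≤ (1 + η * nbar) * (η * nbar) := by
      nlinarith [key]
    have h := one_div_le_one_div_of_le (by positivity) hab
    nlinarith [sq_nonneg nbar]
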